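/- Let D be the digraph obtained from the complete bipartite graph K_{(n−1)/2,(n+1)/2} (n odd) by replacing every edge with two opposite arcs. Then min{d⁺(u) + d⁻(v) : u ≠ v, (u,v) ∉ A(D)} = n − 1 and D has no directed 2-factor. -/

import Mathlib

lemma card_opp_left (a b : ℕ) (c : Bool) (hc : c = true) :
    (Finset.univ.filter (fun w : Fin a ⊕ Fin b => c ≠ w.isLeft)).card = b := by
  subst hc
  have : (Finset.univ.filter (fun w : Fin a ⊕ Fin b => (true : Bool) ≠ w.isLeft))
      = Finset.univ.map ⟨Sum.inr, Sum.inr_injective⟩ := by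
    ext w; cases w <;> simp
  rw [this, Finset.card_map, Finset.card_univ, Fintype.card_fin]

lemma card_opp_right (a b : ℕ) (c : Bool) (hc : c = false) :
    (Finset.univ.filter (fun w : Fin a ⊕ Fin b => c ≠ w.isLeft)).card = a := by
  subst hc
  have : (Finset.univ.filter (fun w : Fin a ⊕ Fin b => (false : Bool) ≠ w.isLeft))
      = Finset.univ.map ⟨Sum.inl, Sum.inl_injective⟩ := by
    ext w; cases w <;> simp
  rw [this, Finset.card_map, Finset.card_univ, Fintype.card_fin]

lemma card_opp_left' (a b : ℕ) (c : Bool) (hc : c = true) :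
    (Finset.univ.filter (fun w : Fin a ⊕ Fin b => w.isLeft ≠ c)).card = b := by
  subst hc
  have : (Finset.univ.filter (fun w : Fin a ⊕ Fin b => w.isLeft ≠ (true : Bool)))
      = Finset.univ.map ⟨Sum.inr, Sum.inr_injective⟩ := by
    ext w; cases w <;> simp
  rw [this, Finset.card_map, Finset.card_univ, Fintype.card_fin]

lemma card_opp_right' (a b : ℕ) (c : Bool) (hc : c = false) :
    (Finset.univ.filter (fun w : Fin a ⊕ Fin b => w.isLeft ≠ c)).card = a := by
  subst hc
  have : (Finset.univ.filter (fun w : Fin a ⊕ Fin b => w.isLeft ≠ (false : Bool)))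
      = Finset.univ.map ⟨Sum.inl, Sum.inl_injective⟩ := by
    ext w; cases w <;> simp
  rw [this, Finset.card_map, Finset.card_univ, Fintype.card_fin]

/-- Sharpness example: let `D` be the digraph obtained from the complete
bipartite graph `K_{(n−1)/2,(n+1)/2}` (`n` odd) by replacing every edge with two
opposite arcs; its vertex type is `Fin ((n−1)/2) ⊕ Fin ((n+1)/2)` and there is
an arc between two vertices iff they lie on opposite sides.  Then
`min{d⁺(u) + d⁻(v) : u ≠ v, (u,v) ∉ A(D)} = n − 1` and `D` has no directed
2-factor (encoded as: no permutation `σ` with an arc from every vertex to its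
image; any such `σ` is automatically fixed-point-free). -/
theorem stmt_18 (n : ℕ) (hn : Odd n) (h3 : 3 ≤ n) :
    (∀ u v : Fin ((n - 1) / 2) ⊕ Fin ((n + 1) / 2), u ≠ v →
      ¬ (u.isLeft ≠ v.isLeft) →
      n - 1 ≤ (Finset.univ.filter (fun w : Fin ((n - 1) / 2) ⊕ Fin ((n + 1) / 2) =>
          u.isLeft ≠ w.isLeft)).card
        + (Finset.univ.filter (fun w : Fin ((n - 1) / 2) ⊕ Fin ((n + 1) / 2) =>
          w.isLeft ≠ v.isLeft)).card) ∧
    (∃ u v : Fin ((n - 1) / 2) ⊕ Fin ((n + 1) / 2), u ≠ v ∧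
      ¬ (u.isLeft ≠ v.isLeft) ∧
      (Finset.univ.filter (fun w : Fin ((n - 1) / 2) ⊕ Fin ((n + 1) / 2) =>
          u.isLeft ≠ w.isLeft)).card
        + (Finset.univ.filter (fun w : Fin ((n - 1) / 2) ⊕ Fin ((n + 1) / 2) =>
          w.isLeft ≠ v.isLeft)).card = n - 1) ∧
    ¬ ∃ σ : Equiv.Perm (Fin ((n - 1) / 2) ⊕ Fin ((n + 1) / 2)),
      ∀ v, v.isLeft ≠ (σ v).isLeft := by
  obtain ⟨k, hk⟩ := hn
  have ha : (n - 1) / 2 = k := by omega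
  have hb : (n + 1) / 2 = k + 1 := by omega
  have hk1 : 1 ≤ k := by omega
  refine ⟨?_, ?_, ?_⟩
  · intro u v huv hsame
    push_neg at hsame
    cases hu : u.isLeft
    · rw [card_opp_right _ _ _ rfl, card_opp_right' _ _ _ (hsame ▸ hu), ha]
      omega
    · rw [card_opp_left _ _ _ rfl, card_opp_left' _ _ _ (hsame ▸ hu), hb]
      omega
  · refine ⟨Sum.inr ⟨0, by omega⟩, Sum.inr ⟨1, by omega⟩, by simp [Fin.ext_iff], by simp, ?_⟩
    rw [card_opp_right _ _ _ Sum.isLeft_inr, card_opp_right' _ _ _ Sum.isLeft_inr, ha]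
    omega
  · rintro ⟨σ, hσ⟩
    have key : ∀ x : Fin ((n + 1) / 2), (σ (Sum.inr x)).isLeft = true := by
      intro x
      have h := hσ (Sum.inr x)
      revert h
      cases σ (Sum.inr x) <;> simp
    have finj : Function.Injective
        (fun x : Fin ((n + 1) / 2) => (σ (Sum.inr x)).getLeft (key x)) := by
      intro x y h
      dsimp only at h
      have : σ (Sum.inr x) = σ (Sum.inr y) := by
        rw [← Sum.inl_getLeft (σ (Sum.inr x)) (key x),
            ← Sum.inl_getLeft (σ (Sum.inr y)) (key y), h]
      exact Sum.inr_injective (σ.injective this)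
    have hle := Fintype.card_le_of_injective _ finj
    simp only [Fintype.card_fin, ha, hb] at hle
    omega
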